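/- For every bipartite graph G, there exists an optimal biclustering 𝓑 of G such that for every vertex v: either exactly deg_G(v) modified edges contain v and all of them are deletions (i.e., v is isolated in 𝓑 relative to its original edges), or at most deg_G(v) − 1 modified edges contain v. -/

import Mathlib

def BipartiteWith {V : Type*} (G : SimpleGraph V) (side : V → Bool) : Prop :=
  ∀ u v, G.Adj u v → side u ≠ side v

def BiclusterGraph {V : Type*} (G : SimpleGraph V) (side : V → Bool) : Prop :=
  ∀ u v, G.Reachable u v → side u ≠ side v → G.Adj u v

def Biclustering {V : Type*} (B : SimpleGraph V) (side : V → Bool) : Prop :=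
  BipartiteWith B side ∧ BiclusterGraph B side

/-- The graph `B` with vertex `v` isolated. -/
private def delV {V : Type*} (B : SimpleGraph V) (v : V) : SimpleGraph V where
  Adj u w := B.Adj u w ∧ u ≠ v ∧ w ≠ v
  symm := by constructor; rintro a b ⟨h, ha, hb⟩; exact ⟨h.symm, hb, ha⟩
  loopless := by constructor; rintro a ⟨h, _, _⟩; exact B.irrefl h

private lemma delV_le {V : Type*} (B : SimpleGraph V) (v : V) : delV B v ≤ B :=
  fun _ _ h => h.1

private lemma delV_edgeSet {V : Type*} (B : SimpleGraph V) (v : V) :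
    (delV B v).edgeSet = B.edgeSet \ {e | v ∈ e} := by
  ext e
  induction e using Sym2.ind with
  | _ a b =>
    simp only [SimpleGraph.mem_edgeSet, Set.mem_diff, Set.mem_setOf_eq, Sym2.mem_iff, delV]
    constructor
    · rintro ⟨h, ha, hb⟩
      exact ⟨h, by rintro (rfl | rfl) <;> simp_all⟩
    · rintro ⟨h, hv⟩
      exact ⟨h, fun h' => hv (Or.inl h'.symm), fun h' => hv (Or.inr h'.symm)⟩

private lemma delV_biclustering {V : Type*} {B : SimpleGraph V} {side : V → Bool}
    (hB : Biclustering B side) (v : V) : Biclustering (delV B v) side := by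
  obtain ⟨h1, h2⟩ := hB
  refine ⟨fun u w h => h1 u w h.1, fun u w hr hs => ?_⟩
  have hne : u ≠ v := by
    rintro rfl
    obtain ⟨p⟩ := hr
    cases p with
    | nil => exact hs rfl
    | cons h _ => exact h.2.1 rfl
  have hne' : w ≠ v := by
    rintro rfl
    obtain ⟨p⟩ := hr.symm
    cases p with
    | nil => exact hs rfl
    | cons h _ => exact h.2.1 rfl
  exact ⟨h2 u w (hr.mono (delV_le B v)) hs, hne, hne'⟩

theorem stmt_12 {V : Type*} [Fintype V] (G : SimpleGraph V) (side : V → Bool)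
    (hG : BipartiteWith G side) :
    ∃ B : SimpleGraph V, Biclustering B side ∧
      (∀ B' : SimpleGraph V, Biclustering B' side →
        (symmDiff G.edgeSet B.edgeSet).ncard ≤ (symmDiff G.edgeSet B'.edgeSet).ncard) ∧
      (∀ v : V,
        ({e ∈ symmDiff G.edgeSet B.edgeSet | v ∈ e}.ncard = (G.neighborSet v).ncard ∧
          ∀ e ∈ symmDiff G.edgeSet B.edgeSet, v ∈ e →
            e ∈ G.edgeSet ∧ e ∉ B.edgeSet) ∨
        {e ∈ symmDiff G.edgeSet B.edgeSet | v ∈ e}.ncard ≤ (G.neighborSet v).ncard - 1) := by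
  classical
  set f : SimpleGraph V → ℕ := fun B => (symmDiff G.edgeSet B.edgeSet).ncard with hf
  set g : SimpleGraph V → ℕ := fun B => B.edgeSet.ncard with hg
  have hbot : Biclustering (⊥ : SimpleGraph V) side := by
    constructor
    · intro u w h; exact absurd h (by simp)
    · intro u w hr hs
      have : u = w := hr.elim fun p => by
        cases p with
        | nil => rfl
        | cons h _ => exact absurd h (by simp)
      exact absurd (this ▸ hs) (by simp)
  -- first minimize f
  have hT : (f '' {B | Biclustering B side}).Nonempty := ⟨f ⊥, ⟨⊥, hbot, rfl⟩⟩
  set m1 := sInf (f '' {B | Biclustering B side}) with hm1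
  have hm1mem := Nat.sInf_mem hT
  have hm1le : ∀ B : SimpleGraph V, Biclustering B side → m1 ≤ f B := fun B hB =>
    Nat.sInf_le ⟨B, hB, rfl⟩
  -- then minimize g
  have hT2 : (g '' {B | Biclustering B side ∧ f B = m1}).Nonempty := by
    obtain ⟨B, hB, hfB⟩ := hm1mem
    exact ⟨g B, B, ⟨hB, hfB⟩, rfl⟩
  obtain ⟨B, ⟨hB, hfB⟩, hgB⟩ := Nat.sInf_mem hT2
  have hgle : ∀ B' : SimpleGraph V, Biclustering B' side → f B' = m1 → g B ≤ g B' := by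
    intro B' hB' hf'
    rw [hgB]; exact Nat.sInf_le ⟨B', ⟨hB', hf'⟩, rfl⟩
  refine ⟨B, hB, fun B' hB' => ?_, fun v => ?_⟩
  · show f B ≤ f B'
    rw [hfB]; exact hm1le B' hB'
  -- key set identities
  set S := symmDiff G.edgeSet B.edgeSet with hS
  set Sv := {e ∈ S | v ∈ e} with hSv
  have hSvS : Sv ⊆ S := fun e he => he.1
  have hkey : symmDiff G.edgeSet (delV B v).edgeSet = (S \ Sv) ∪ G.incidenceSet v := by
    ext e
    by_cases hv : v ∈ e <;>
      simp only [Set.mem_symmDiff, delV_edgeSet, Set.mem_diff, Set.mem_setOf_eq, hv,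
        Set.mem_union, SimpleGraph.incidenceSet, hS, hSv, Set.mem_sep_iff,
        not_true, not_false_iff, and_true, and_false, or_false, false_or] <;> tauto
  have hdisj : Disjoint (S \ Sv) (G.incidenceSet v) := by
    rw [Set.disjoint_left]
    rintro e ⟨heS, heSv⟩ ⟨_, hev⟩
    exact heSv ⟨heS, hev⟩
  have hinc : (G.incidenceSet v).ncard = (G.neighborSet v).ncard := by
    rw [← Nat.card_coe_set_eq, ← Nat.card_coe_set_eq]
    exact Nat.card_congr (G.incidenceSetEquivNeighborSet v)
  set d := (G.neighborSet v).ncard with hd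
  have hSfin : S.Finite := Set.toFinite _
  have hcount : f (delV B v) = (S.ncard - Sv.ncard) + d := by
    rw [hf]
    show (symmDiff G.edgeSet (delV B v).edgeSet).ncard = _
    rw [hkey, Set.ncard_union_eq hdisj (Set.toFinite _) (Set.toFinite _),
      Set.ncard_diff hSvS (Set.toFinite _), hinc]
  have hle : Sv.ncard ≤ S.ncard := Set.ncard_le_ncard hSvS hSfin
  have hopt : f B ≤ f (delV B v) := hfB ▸ hm1le _ (delV_biclustering hB v)
  have hfBS : f B = S.ncard := rfl
  have hcnt_le : Sv.ncard ≤ d := by omega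
  rcases eq_or_lt_of_le hcnt_le with heq | hlt
  · -- all modified edges at v are deletions
    left
    refine ⟨heq, fun e heS hev => ?_⟩
    by_contra hcon
    have heB : e ∈ B.edgeSet := by
      rw [hS, Set.mem_symmDiff] at heS
      rcases heS with ⟨h1, h2⟩ | ⟨h1, h2⟩
      · exact absurd ⟨h1, h2⟩ hcon
      · exact h1
    have hfeq : f (delV B v) = m1 := by
      rw [hcount, heq]; omega
    have hglt : g (delV B v) < g B := by
      rw [hg]
      refine Set.ncard_lt_ncard ?_ (Set.toFinite _)
      rw [delV_edgeSet]
      constructor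
      · exact Set.diff_subset
      · intro hsub
        exact (hsub heB).2 hev
    exact absurd (hgle _ (delV_biclustering hB v) hfeq) (by omega)
  · right
    omega
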